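/- Let p, q > 0, α > 0, β ∈ ℝ, and define ψ(θ) = φ(θ)^{2β-1}[1 + (β/α)²(q cot θ − p tan θ)²] on (0, π/2), where φ(θ) = cos^p θ sin^q θ / (cos^p θ₀ sin^q θ₀) and tan²θ₀ = q/p. If η_β(θ) > 0 for all θ ∈ (0, π/2), where η_β(θ) = (2β-1)[1 + (β/α)²(q cot θ − p tan θ)²] − 2(β/α)²(q/sin²θ + p/cos²θ), then ψ(θ) ≤ ψ(θ₀) = 1 for all θ ∈ (0, π/2). -/

import Mathlib

open Real

set_option maxHeartbeats 1000000 in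

theorem stmt6 (p q α β θ₀ : ℝ) (hp : 0 < p) (hq : 0 < q) (hα : 0 < α)
    (hθ₀ : θ₀ ∈ Set.Ioo 0 (π / 2)) (htan : tan θ₀ ^ 2 = q / p)
    (φ ψ : ℝ → ℝ)
    (hφ : ∀ θ, φ θ = cos θ ^ p * sin θ ^ q / (cos θ₀ ^ p * sin θ₀ ^ q))
    (hψ : ∀ θ, ψ θ = φ θ ^ (2 * β - 1) *
      (1 + (β / α) ^ 2 * (q * (cos θ / sin θ) - p * (sin θ / cos θ)) ^ 2))
    (hη : ∀ θ ∈ Set.Ioo 0 (π / 2),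
      0 < (2 * β - 1) *
          (1 + (β / α) ^ 2 *
            (q * (cos θ / sin θ) - p * (sin θ / cos θ)) ^ 2)
        - 2 * (β / α) ^ 2 * (q / sin θ ^ 2 + p / cos θ ^ 2)) :
    ψ θ₀ = 1 ∧ ∀ θ ∈ Set.Ioo 0 (π / 2), ψ θ ≤ ψ θ₀ := by
  obtain ⟨h0, h2⟩ := hθ₀
  have hpi := pi_pos
  -- positivity of sin/cos on (0, π/2)
  have hsin : ∀ x ∈ Set.Ioo 0 (π / 2), 0 < sin x := fun x hx =>
    sin_pos_of_pos_of_lt_pi hx.1 (by linarith [hx.2])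
  have hcos : ∀ x ∈ Set.Ioo 0 (π / 2), 0 < cos x := fun x hx =>
    cos_pos_of_mem_Ioo ⟨by linarith [hx.1], hx.2⟩
  have hs₀ : 0 < sin θ₀ := hsin θ₀ ⟨h0, h2⟩
  have hc₀ : 0 < cos θ₀ := hcos θ₀ ⟨h0, h2⟩
  set c : ℝ := (β / α) ^ 2 with hc
  set u : ℝ → ℝ := fun x => q * (cos x / sin x) - p * (sin x / cos x) with hu
  set F : ℝ → ℝ := fun x => p * Real.log (cos x) + q * Real.log (sin x) with hF
  set g : ℝ → ℝ := fun x => Real.exp ((2 * β - 1) * (F x - F θ₀)) * (1 + c * (u x) ^ 2)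
    with hg
  -- p sin²θ₀ = q cos²θ₀
  have key : p * sin θ₀ ^ 2 = q * cos θ₀ ^ 2 := by
    rw [tan_eq_sin_div_cos, div_pow] at htan
    field_simp at htan
    linarith
  have hu₀ : u θ₀ = 0 := by
    simp only [hu]
    field_simp
    linarith
  -- ψ = g on the interval
  have hψg : ∀ x ∈ Set.Ioo 0 (π / 2), ψ x = g x := by
    intro x hx
    have hsx := hsin x hx
    have hcx := hcos x hx
    have hφx : φ x = Real.exp (F x - F θ₀) := by
      rw [hφ, rpow_def_of_pos hcx, rpow_def_of_pos hsx, rpow_def_of_pos hc₀,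
        rpow_def_of_pos hs₀, ← exp_add, ← exp_add, ← exp_sub]
      ring_nf
      simp only [hF]; ring_nf
    rw [hψ, hφx, rpow_def_of_pos (exp_pos _), log_exp, hg]
    simp only [hu]; ring_nf
  -- sign of u
  have husign : ∀ x ∈ Set.Ioo 0 (π / 2), x ≠ θ₀ →
      (x < θ₀ → 0 < u x) ∧ (θ₀ < x → u x < 0) := by
    intro x hx _
    have hsx := hsin x hx
    have hcx := hcos x hx
    have htanx : tan x = sin x / cos x := tan_eq_sin_div_cos x
    have hmem : x ∈ Set.Ioo (-(π / 2)) (π / 2) := ⟨by linarith [hx.1], hx.2⟩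
    have hmem₀ : θ₀ ∈ Set.Ioo (-(π / 2)) (π / 2) := ⟨by linarith, h2⟩
    have htx : 0 ≤ tan x := by
      rw [htanx]; positivity
    have ht₀ : 0 ≤ tan θ₀ := by
      rw [tan_eq_sin_div_cos]; positivity
    constructor
    · intro hlt
      have : tan x < tan θ₀ := strictMonoOn_tan hmem hmem₀ hlt
      have h2 : tan x ^ 2 < tan θ₀ ^ 2 := by nlinarith
      rw [htan, htanx, div_pow, div_lt_div_iff₀ (by positivity) hp] at h2
      simp only [hu]
      rw [sub_pos, mul_div_assoc', mul_div_assoc', div_lt_div_iff₀ hcx hsx]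
      nlinarith
    · intro hlt
      have : tan θ₀ < tan x := strictMonoOn_tan hmem₀ hmem hlt
      have h2 : tan θ₀ ^ 2 < tan x ^ 2 := by nlinarith
      rw [htan, htanx, div_pow, div_lt_div_iff₀ hp (by positivity)] at h2
      simp only [hu]
      rw [sub_neg, mul_div_assoc', mul_div_assoc', div_lt_div_iff₀ hsx hcx]
      nlinarith
  -- derivative of g
  have hderiv : ∀ x ∈ Set.Ioo 0 (π / 2),
      HasDerivAt g (Real.exp ((2 * β - 1) * (F x - F θ₀)) * u x *
        ((2 * β - 1) * (1 + c * (u x) ^ 2)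
          - 2 * c * (q / sin x ^ 2 + p / cos x ^ 2))) x := by
    intro x hx
    have hsx := hsin x hx
    have hcx := hcos x hx
    have pyth := sin_sq_add_cos_sq x
    have hFx : HasDerivAt F (u x) x := by
      have h1 : HasDerivAt (fun y => Real.log (cos y)) (-sin x / cos x) x :=
        (Real.hasDerivAt_cos x).log hcx.ne'
      have h2 : HasDerivAt (fun y => Real.log (sin y)) (cos x / sin x) x :=
        (Real.hasDerivAt_sin x).log hsx.ne'
      have := (h1.const_mul p).add (h2.const_mul q)
      refine this.congr_deriv ?_
      simp only [hu]; ring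
    have hux : HasDerivAt u (-(q / sin x ^ 2) - p / cos x ^ 2) x := by
      have h1 : HasDerivAt (fun y => cos y / sin y)
          ((-sin x * sin x - cos x * cos x) / sin x ^ 2) x :=
        (Real.hasDerivAt_cos x).div (Real.hasDerivAt_sin x) hsx.ne'
      have h2 : HasDerivAt (fun y => sin y / cos y)
          ((cos x * cos x - sin x * -sin x) / cos x ^ 2) x :=
        (Real.hasDerivAt_sin x).div (Real.hasDerivAt_cos x) hcx.ne'
      have hval : q * ((-sin x * sin x - cos x * cos x) / sin x ^ 2)
          - p * ((cos x * cos x - sin x * -sin x) / cos x ^ 2)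
          = -(q / sin x ^ 2) - p / cos x ^ 2 := by
        rw [show -sin x * sin x - cos x * cos x = -1 by linear_combination -pyth,
          show cos x * cos x - sin x * -sin x = 1 by linear_combination pyth]
        ring
      exact hval ▸ ((h1.const_mul q).sub (h2.const_mul p))
    have hE : HasDerivAt (fun y => Real.exp ((2 * β - 1) * (F y - F θ₀)))
        ((2 * β - 1) * u x * Real.exp ((2 * β - 1) * (F x - F θ₀))) x := by
      have := (((hFx.sub_const (F θ₀)).const_mul (2 * β - 1))).exp
      convert this using 1
      ring
    have hinner : HasDerivAt (fun y => 1 + c * (u y) ^ 2)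
        (c * (2 * u x * (-(q / sin x ^ 2) - p / cos x ^ 2))) x := by
      have := ((hux.pow 2).const_mul c).const_add 1
      refine this.congr_deriv ?_
      push_cast; ring
    have := hE.mul hinner
    refine this.congr_deriv ?_
    ring
  -- continuity / differentiability of g on the interval
  have hcont : ∀ s ⊆ Set.Ioo 0 (π / 2), ContinuousOn g s := by
    intro s hs
    exact fun x hx => ((hderiv x (hs hx)).continuousAt).continuousWithinAt
  have hφ₀ : φ θ₀ = 1 := by
    rw [hφ]
    rw [div_self]
    have h1 : (0:ℝ) < cos θ₀ ^ p := rpow_pos_of_pos hc₀ p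
    have h2 : (0:ℝ) < sin θ₀ ^ q := rpow_pos_of_pos hs₀ q
    positivity
  have hu₀' : q * (cos θ₀ / sin θ₀) - p * (sin θ₀ / cos θ₀) = 0 := by
    have := hu₀; simp only [hu] at this; exact this
  have hψ₀ : ψ θ₀ = 1 := by
    rw [hψ, hφ₀, one_rpow, hu₀']
    norm_num
  refine ⟨hψ₀, ?_⟩
  intro θ hθ
  rcases lt_trichotomy θ θ₀ with hlt | heq | hgt
  · -- monotone on [θ, θ₀]
    have hsub : Set.Icc θ θ₀ ⊆ Set.Ioo 0 (π / 2) := fun x hx =>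
      ⟨lt_of_lt_of_le hθ.1 hx.1, lt_of_le_of_lt hx.2 h2⟩
    have hmono : StrictMonoOn g (Set.Icc θ θ₀) := by
      apply strictMonoOn_of_deriv_pos (convex_Icc _ _) (hcont _ hsub)
      intro x hx
      rw [interior_Icc] at hx
      have hx' : x ∈ Set.Ioo 0 (π / 2) := hsub ⟨hx.1.le, hx.2.le⟩
      rw [(hderiv x hx').deriv]
      have hupos := (husign x hx' (ne_of_lt hx.2)).1 hx.2
      have hηpos : 0 < (2 * β - 1) * (1 + c * (u x) ^ 2)
          - 2 * c * (q / sin x ^ 2 + p / cos x ^ 2) := by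
        have hηx := hη x hx'
        simp only [hu]
        convert hηx using 2
      exact mul_pos (mul_pos (exp_pos _) hupos) hηpos
    rw [hψg θ hθ, hψg θ₀ ⟨h0, h2⟩]
    exact le_of_lt (hmono (Set.left_mem_Icc.mpr hlt.le) (Set.right_mem_Icc.mpr hlt.le) hlt)
  · rw [heq]
  · have hsub : Set.Icc θ₀ θ ⊆ Set.Ioo 0 (π / 2) := fun x hx =>
      ⟨lt_of_lt_of_le h0 hx.1, lt_of_le_of_lt hx.2 hθ.2⟩
    have hanti : StrictAntiOn g (Set.Icc θ₀ θ) := by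
      apply strictAntiOn_of_deriv_neg (convex_Icc _ _) (hcont _ hsub)
      intro x hx
      rw [interior_Icc] at hx
      have hx' : x ∈ Set.Ioo 0 (π / 2) := hsub ⟨hx.1.le, hx.2.le⟩
      rw [(hderiv x hx').deriv]
      have huneg := (husign x hx' (ne_of_gt hx.1)).2 hx.1
      have hηpos : 0 < (2 * β - 1) * (1 + c * (u x) ^ 2)
          - 2 * c * (q / sin x ^ 2 + p / cos x ^ 2) := by
        have hηx := hη x hx'
        simp only [hu]
        convert hηx using 2
      exact mul_neg_of_neg_of_pos
        (mul_neg_of_pos_of_neg (exp_pos _) huneg) hηpos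
    rw [hψg θ hθ, hψg θ₀ ⟨h0, h2⟩]
    exact le_of_lt (hanti (Set.left_mem_Icc.mpr hgt.le) (Set.right_mem_Icc.mpr hgt.le) hgt)
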